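/- Let m₁, m₂ be natural numbers, let G be a (simple) graph, and let vw be an edge of G such that deg(v) > m₁, deg(w) > m₂, and |N(v) ∪ N(w)| ≥ m₁ + m₂ + 2, where N(x) denotes the neighbourhood of x in G. Then G contains a copy of the double star S(m₁, m₂) (as a subgraph). -/

import Mathlib

open SimpleGraph

/-- `G` contains a copy of `H` as a subgraph, i.e. there is an injective graph
homomorphism from `H` to `G`. -/
def Contains {V W : Type*} (G : SimpleGraph V) (H : SimpleGraph W) : Prop :=
  ∃ f : H →g G, Function.Injective f

/-- The double star `S(m₁, m₂)`: two adjacent centres `0` and `1`, where centre `0`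
has `m₁` leaves (the vertices `2, …, m₁ + 1`) and centre `1` has `m₂` leaves
(the vertices `m₁ + 2, …, m₁ + m₂ + 1`). -/
def DoubleStar (m₁ m₂ : ℕ) : SimpleGraph (Fin (m₁ + m₂ + 2)) :=
  SimpleGraph.fromRel (fun i j =>
    (i.val = 0 ∧ 0 < j.val ∧ j.val < m₁ + 2) ∨ (i.val = 1 ∧ m₁ + 2 ≤ j.val))

lemma aux_disjoint {α : Type*} [DecidableEq α] (X Y : Finset α) (m₁ m₂ : ℕ)
    (hX : m₁ ≤ X.card) (hY : m₂ ≤ Y.card) (hXY : m₁ + m₂ ≤ (X ∪ Y).card) :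
    ∃ S T : Finset α, S ⊆ X ∧ T ⊆ Y ∧ S.card = m₁ ∧ T.card = m₂ ∧ Disjoint S T := by
  by_cases h : m₁ ≤ (X \ Y).card
  · obtain ⟨S, hS, hScard⟩ := Finset.exists_subset_card_eq h
    obtain ⟨T, hT, hTcard⟩ := Finset.exists_subset_card_eq hY
    refine ⟨S, T, hS.trans Finset.sdiff_subset, hT, hScard, hTcard, ?_⟩
    exact Finset.sdiff_disjoint.mono hS hT
  · push_neg at h
    obtain ⟨S, hS1, hS2, hScard⟩ := Finset.exists_subsuperset_card_eq
      (Finset.sdiff_subset (s := X) (t := Y)) (n := (m₁ - (X \ Y).card) + (X \ Y).card) (by omega) (by omega)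
    have hScard' : S.card = m₁ := by rw [hScard]; omega
    have hsub : (Y ∩ S) ∪ (X \ Y) ⊆ S := by
      intro x hx
      rcases Finset.mem_union.mp hx with hx | hx
      · exact (Finset.mem_inter.mp hx).2
      · exact hS1 hx
    have hdisj : Disjoint (Y ∩ S) (X \ Y) := by
      refine Finset.disjoint_left.mpr fun x hx hx' => ?_
      exact (Finset.mem_sdiff.mp hx').2 (Finset.mem_inter.mp hx).1
    have hcard1 : (Y ∩ S).card + (X \ Y).card ≤ S.card := by
      rw [← Finset.card_union_of_disjoint hdisj]
      exact Finset.card_le_card hsub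
    have hcard2 : (Y \ S).card + (Y ∩ S).card = Y.card := Finset.card_sdiff_add_card_inter Y S
    have hcard3 : (X \ Y).card + Y.card = (X ∪ Y).card := Finset.card_sdiff_add_card X Y
    have hYS : m₂ ≤ (Y \ S).card := by omega
    obtain ⟨T, hT, hTcard⟩ := Finset.exists_subset_card_eq hYS
    refine ⟨S, T, hS2, hT.trans Finset.sdiff_subset, hScard', hTcard, ?_⟩
    exact (Finset.sdiff_disjoint.mono_left hT).symm

theorem stmt_2 {V : Type*} [Fintype V] [DecidableEq V]
    (m₁ m₂ : ℕ) (G : SimpleGraph V) [DecidableRel G.Adj]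
    (v w : V) (hvw : G.Adj v w)
    (hv : m₁ < G.degree v) (hw : m₂ < G.degree w)
    (hunion : m₁ + m₂ + 2 ≤ (G.neighborFinset v ∪ G.neighborFinset w).card) :
    Contains G (DoubleStar m₁ m₂) := by
  classical
  have hwv : w ∈ G.neighborFinset v := by simpa using hvw
  have hvwn : v ∈ G.neighborFinset w := by simpa using hvw.symm
  set X := (G.neighborFinset v).erase w with hXdef
  set Y := (G.neighborFinset w).erase v with hYdef
  have hXcard : m₁ ≤ X.card := by
    rw [hXdef, Finset.card_erase_of_mem hwv, card_neighborFinset_eq_degree]; omega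
  have hYcard : m₂ ≤ Y.card := by
    rw [hYdef, Finset.card_erase_of_mem hvwn, card_neighborFinset_eq_degree]; omega
  have hXY : m₁ + m₂ ≤ (X ∪ Y).card := by
    have hsub : G.neighborFinset v ∪ G.neighborFinset w ⊆ insert v (insert w (X ∪ Y)) := by
      intro x hx
      simp only [hXdef, hYdef, Finset.mem_union, Finset.mem_insert, Finset.mem_erase] at hx ⊢
      by_cases hxv : x = v
      · tauto
      by_cases hxw : x = w
      · tauto
      tauto
    have h1 := Finset.card_le_card hsub
    have h2 := Finset.card_insert_le v (insert w (X ∪ Y))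
    have h3 := Finset.card_insert_le w (X ∪ Y)
    omega
  obtain ⟨S, T, hSX, hTY, hScard, hTcard, hST⟩ := aux_disjoint X Y m₁ m₂ hXcard hYcard hXY
  -- basic membership facts
  have hSv : ∀ x ∈ S, G.Adj v x := fun x hx =>
    (mem_neighborFinset G v x).mp (Finset.mem_of_mem_erase (hSX hx))
  have hTw : ∀ x ∈ T, G.Adj w x := fun x hx =>
    (mem_neighborFinset G w x).mp (Finset.mem_of_mem_erase (hTY hx))
  have hvS : v ∉ S := fun h => G.loopless.irrefl v (hSv v h)
  have hwT : w ∉ T := fun h => G.loopless.irrefl w (hTw w h)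
  have hwS : w ∉ S := fun h => (Finset.mem_erase.mp (hSX h)).1 rfl
  have hvT : v ∉ T := fun h => (Finset.mem_erase.mp (hTY h)).1 rfl
  -- enumerations
  let eS := (Finset.equivFinOfCardEq hScard).symm
  let fS : Fin m₁ → V := fun k => (eS k : V)
  have hfS : ∀ k, fS k ∈ S := fun k => (eS k).2
  have hfSinj : Function.Injective fS := fun a b h =>
    eS.injective (Subtype.ext h)
  let eT := (Finset.equivFinOfCardEq hTcard).symm
  let fT : Fin m₂ → V := fun k => (eT k : V)
  have hfT : ∀ k, fT k ∈ T := fun k => (eT k).2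
  have hfTinj : Function.Injective fT := fun a b h =>
    eT.injective (Subtype.ext h)
  have hfSfT : ∀ k l, fS k ≠ fT l := fun k l h =>
    Finset.disjoint_left.mp hST (hfS k) (h ▸ hfT l)
  let f : Fin (m₁ + m₂ + 2) → V := fun i =>
    if h0 : i.val = 0 then v
    else if h1 : i.val = 1 then w
    else if h2 : i.val < m₁ + 2 then fS ⟨i.val - 2, by omega⟩
    else fT ⟨i.val - (m₁ + 2), by have := i.isLt; omega⟩
  have hf0 : ∀ i : Fin (m₁ + m₂ + 2), i.val = 0 → f i = v := by
    intro i hi; simp only [f, hi]; rfl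
  have hf1 : ∀ i : Fin (m₁ + m₂ + 2), i.val = 1 → f i = w := by
    intro i hi; simp only [f]; rw [dif_neg (by omega), dif_pos hi]
  have hfSval : ∀ (i : Fin (m₁ + m₂ + 2)) (h : 2 ≤ i.val ∧ i.val < m₁ + 2),
      f i = fS ⟨i.val - 2, by omega⟩ := by
    intro i hi; simp only [f]; rw [dif_neg (by omega), dif_neg (by omega), dif_pos hi.2]
  have hfTval : ∀ (i : Fin (m₁ + m₂ + 2)) (h : m₁ + 2 ≤ i.val),
      f i = fT ⟨i.val - (m₁ + 2), by have := i.isLt; omega⟩ := by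
    intro i hi; simp only [f]
    rw [dif_neg (by omega), dif_neg (by omega), dif_neg (by omega)]
  have key : ∀ a b : Fin (m₁ + m₂ + 2),
      ((a.val = 0 ∧ 0 < b.val ∧ b.val < m₁ + 2) ∨ (a.val = 1 ∧ m₁ + 2 ≤ b.val)) →
      G.Adj (f a) (f b) := by
    intro a b hr
    rcases hr with ⟨ha, hb1, hb2⟩ | ⟨ha, hb⟩
    · rw [hf0 a ha]
      rcases Nat.lt_or_ge b.val 2 with hb' | hb'
      · have hb1' : b.val = 1 := by omega
        rw [hf1 b hb1']; exact hvw
      · rw [hfSval b ⟨hb', hb2⟩]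
        exact hSv _ (hfS _)
    · rw [hf1 a ha, hfTval b hb]
      exact hTw _ (hfT _)
  refine ⟨⟨f, ?_⟩, ?_⟩
  · intro a b hab
    rw [DoubleStar, SimpleGraph.fromRel_adj] at hab
    obtain ⟨hne, hr | hr⟩ := hab
    · exact key a b hr
    · exact (key b a hr).symm
  · intro a b hab
    replace hab : f a = f b := hab
    have hva := a.isLt
    have hvb := b.isLt
    rcases Nat.lt_or_ge a.val 2 with ha | ha <;> rcases Nat.lt_or_ge b.val 2 with hb | hb
    · -- a,b ∈ {0,1}
      rcases Nat.lt_or_ge a.val 1 with ha1 | ha1 <;> rcases Nat.lt_or_ge b.val 1 with hb1 | hb1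
      · exact Fin.ext (by omega)
      · rw [hf0 a (by omega), hf1 b (by omega)] at hab
        exact absurd hab hvw.ne
      · rw [hf1 a (by omega), hf0 b (by omega)] at hab
        exact absurd hab.symm hvw.ne
      · exact Fin.ext (by omega)
    · rcases Nat.lt_or_ge b.val (m₁ + 2) with hb2 | hb2
      all_goals rcases Nat.lt_or_ge a.val 1 with ha1 | ha1
      · rw [hf0 a (by omega), hfSval b ⟨hb, hb2⟩] at hab
        exact absurd (hab ▸ hfS _) hvS
      · rw [hf1 a (by omega), hfSval b ⟨hb, hb2⟩] at hab
        exact absurd (hab ▸ hfS _) hwS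
      · rw [hf0 a (by omega), hfTval b hb2] at hab
        exact absurd (hab ▸ hfT _) hvT
      · rw [hf1 a (by omega), hfTval b hb2] at hab
        exact absurd (hab ▸ hfT _) hwT
    · rcases Nat.lt_or_ge a.val (m₁ + 2) with ha2 | ha2
      all_goals rcases Nat.lt_or_ge b.val 1 with hb1 | hb1
      · rw [hfSval a ⟨ha, ha2⟩, hf0 b (by omega)] at hab
        exact absurd (hab ▸ hfS _) hvS
      · rw [hfSval a ⟨ha, ha2⟩, hf1 b (by omega)] at hab
        exact absurd (hab ▸ hfS _) hwS
      · rw [hfTval a ha2, hf0 b (by omega)] at hab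
        exact absurd (hab ▸ hfT _) hvT
      · rw [hfTval a ha2, hf1 b (by omega)] at hab
        exact absurd (hab ▸ hfT _) hwT
    · rcases Nat.lt_or_ge a.val (m₁ + 2) with ha2 | ha2 <;>
        rcases Nat.lt_or_ge b.val (m₁ + 2) with hb2 | hb2
      · rw [hfSval a ⟨ha, ha2⟩, hfSval b ⟨hb, hb2⟩] at hab
        have h2 : a.val - 2 = b.val - 2 := congrArg Fin.val (hfSinj hab)
        exact Fin.ext (by omega)
      · rw [hfSval a ⟨ha, ha2⟩, hfTval b hb2] at hab
        exact absurd hab (hfSfT _ _)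
      · rw [hfTval a ha2, hfSval b ⟨hb, hb2⟩] at hab
        exact absurd hab.symm (hfSfT _ _)
      · rw [hfTval a ha2, hfTval b hb2] at hab
        have h2 : a.val - (m₁ + 2) = b.val - (m₁ + 2) := congrArg Fin.val (hfTinj hab)
        exact Fin.ext (by omega)
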